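/- Let A be a Noetherian ring and R a flat A-algebra. Then the total ring of fractions satisfies Q(R) = Q(R ⊗_A Q(A)), where Q(A) is the total quotient ring of A. -/

import Mathlib

set_option synthInstance.maxHeartbeats 1000000
set_option maxHeartbeats 1000000

open scoped TensorProduct

attribute [local instance] Algebra.TensorProduct.rightAlgebra

/-- Let `A` be Noetherian and `R` a flat `A`-algebra. Then the total quotient ring of `R`
agrees with that of `R ⊗_A Q(A)`: there is a ring isomorphism
`Q(R ⊗_A Q(A)) ≅ Q(R)` compatible with the canonical maps from `R`. -/
theorem stmt14 (A R : Type*) [CommRing A] [IsNoetherianRing A]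
    [CommRing R] [IsNoetherianRing R] [Algebra A R] [Module.Flat A R] :
    ∃ e : Localization (nonZeroDivisors (R ⊗[A] Localization (nonZeroDivisors A))) ≃+*
        Localization (nonZeroDivisors R),
      (e : Localization (nonZeroDivisors (R ⊗[A] Localization (nonZeroDivisors A))) →+*
          Localization (nonZeroDivisors R)).comp
        ((algebraMap (R ⊗[A] Localization (nonZeroDivisors A))
            (Localization (nonZeroDivisors (R ⊗[A] Localization (nonZeroDivisors A))))).comp
          (Algebra.TensorProduct.includeLeftRingHom :
            R →+* R ⊗[A] Localization (nonZeroDivisors A))) =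
        algebraMap R (Localization (nonZeroDivisors R)) := by
  classical
  set K := Localization (nonZeroDivisors A) with hK
  set T := R ⊗[A] K with hT
  set M : Submonoid R := Algebra.algebraMapSubmonoid R (nonZeroDivisors A) with hM'
  -- T is the localization of R at M
  haveI : IsLocalization M T := by
    rw [← isLocalizedModule_iff_isLocalization]
    rw [isLocalizedModule_iff_isBaseChange (S := nonZeroDivisors A) (A := K)]
    exact (TensorProduct.isPushout' (R := A) (S := R) (T := K)).out
  -- M consists of nonzerodivisors, by flatness
  have hM : M ≤ nonZeroDivisors R := by
    rintro _ ⟨a, ha, rfl⟩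
    have regA : IsSMulRegular A a := by
      intro x y hxy
      have : (x - y) * a = 0 := by
        simp only [smul_eq_mul] at hxy
        rw [sub_mul, mul_comm x a, mul_comm y a, hxy, sub_self]
      have := (mem_nonZeroDivisors_iff.mp ha).2 _ this
      exact sub_eq_zero.mp this
    have regT : IsSMulRegular (R ⊗[A] A) a := regA.lTensor R
    have regR : IsSMulRegular R a := fun x y hxy =>
      (TensorProduct.rid A R).symm.injective (regT (by
        show a • (TensorProduct.rid A R).symm x = a • (TensorProduct.rid A R).symm y
        rw [← map_smul, ← map_smul]
        exact congrArg _ hxy))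
    rw [mem_nonZeroDivisors_iff_right]
    intro r hr
    apply regR
    show a • r = a • (0 : R)
    rw [smul_zero, Algebra.smul_def, mul_comm, hr]
  -- set up the localization tower
  letI : Algebra T (Localization (nonZeroDivisors R)) :=
    IsLocalization.localizationAlgebraOfSubmonoidLe T (Localization (nonZeroDivisors R))
      M (nonZeroDivisors R) hM
  haveI : IsScalarTower R T (Localization (nonZeroDivisors R)) :=
    IsLocalization.localization_isScalarTower_of_submonoid_le T
      (Localization (nonZeroDivisors R)) M (nonZeroDivisors R) hM
  haveI : IsFractionRing T (Localization (nonZeroDivisors R)) :=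
    IsFractionRing.isFractionRing_of_isLocalization M T (Localization (nonZeroDivisors R)) hM
  let e : Localization (nonZeroDivisors T) ≃ₐ[T] Localization (nonZeroDivisors R) :=
    IsLocalization.algEquiv (nonZeroDivisors T) (Localization (nonZeroDivisors T))
      (Localization (nonZeroDivisors R))
  refine ⟨e.toRingEquiv, ?_⟩
  ext r
  show e (algebraMap T (Localization (nonZeroDivisors T))
      (Algebra.TensorProduct.includeLeftRingHom r)) = algebraMap R (Localization (nonZeroDivisors R)) r
  rw [AlgEquiv.commutes]
  have h1 : (Algebra.TensorProduct.includeLeftRingHom r : T) = algebraMap R T r := rfl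
  rw [h1, ← IsScalarTower.algebraMap_apply R T (Localization (nonZeroDivisors R))]
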